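/- For all r, τ, c ∈ ℝ, setting β_c := √(c²r² + 1/4), the 2×2 complex matrix with entries [[cos(β_c τ) + (i/(2β_c))·sin(β_c τ), (cr/β_c)·sin(β_c τ)], [−(cr/β_c)·sin(β_c τ), cos(β_c τ) − (i/(2β_c))·sin(β_c τ)]] equals the matrix exponential exp(−(τ/2)·(2rc·τ₂ + τ₃)). -/

import Mathlib

open Matrix

/-- The matrix `τ₂ = [[0, −1], [1, 0]]`. -/
noncomputable def tau2 : Matrix (Fin 2) (Fin 2) ℂ := !![0, -1; 1, 0]

/-- The matrix `τ₃ = [[−i, 0], [0, i]]`. -/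
noncomputable def tau3 : Matrix (Fin 2) (Fin 2) ℂ := !![-Complex.I, 0; 0, Complex.I]

/-- The matrix `A(τ,c)` (for the parameter `r`), with `β_c = √(c²r² + 1/4)`. -/
noncomputable def Amat (r τ c : ℝ) : Matrix (Fin 2) (Fin 2) ℂ :=
  !![(Real.cos (Real.sqrt (c^2*r^2 + 1/4) * τ) : ℂ)
        + (Complex.I / (2 * (Real.sqrt (c^2*r^2 + 1/4) : ℂ)))
          * (Real.sin (Real.sqrt (c^2*r^2 + 1/4) * τ) : ℂ),
      ((c * r / Real.sqrt (c^2*r^2 + 1/4)) * Real.sin (Real.sqrt (c^2*r^2 + 1/4) * τ) : ℝ);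
    -(((c * r / Real.sqrt (c^2*r^2 + 1/4)) * Real.sin (Real.sqrt (c^2*r^2 + 1/4) * τ) : ℝ) : ℂ),
      (Real.cos (Real.sqrt (c^2*r^2 + 1/4) * τ) : ℂ)
        - (Complex.I / (2 * (Real.sqrt (c^2*r^2 + 1/4) : ℂ)))
          * (Real.sin (Real.sqrt (c^2*r^2 + 1/4) * τ) : ℂ)]

/-- Auxiliary form of the statement, for an abstract `β` with `β² = a² + 1/4`. -/
lemma statement12_aux (β a τ : ℝ) (hβ : 0 < β) (h2 : β^2 = a^2 + 1/4) :
    !![(Real.cos (β * τ) : ℂ)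
        + (Complex.I / (2 * (β : ℂ))) * (Real.sin (β * τ) : ℂ),
      ((a / β) * Real.sin (β * τ) : ℝ);
    -(((a / β) * Real.sin (β * τ) : ℝ) : ℂ),
      (Real.cos (β * τ) : ℂ)
        - (Complex.I / (2 * (β : ℂ))) * (Real.sin (β * τ) : ℂ)]
      = NormedSpace.exp
          ((-(τ : ℂ) / 2) • ((2 * (a : ℂ)) • tau2 + tau3)) := by
  have hβne : (β : ℂ) ≠ 0 := by exact_mod_cast hβ.ne'
  have hβ2 : (β : ℂ)^2 = (a : ℂ)^2 + 1/4 := by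
    have := congrArg (Complex.ofReal) h2
    push_cast at this
    exact this
  set U : Matrix (Fin 2) (Fin 2) ℂ :=
    !![-2*(a:ℂ), Complex.I*(1+2*(β:ℂ)); Complex.I*(1+2*(β:ℂ)), -2*(a:ℂ)] with hUdef
  have hdet : U.det = ((4*a^2 + (1+2*β)^2 : ℝ) : ℂ) := by
    simp [hUdef, Matrix.det_fin_two_of]
    push_cast
    linear_combination (-1 - 4*(β:ℂ) - 4*(β:ℂ)^2) * Complex.I_sq
  have hdetU : IsUnit U.det := by
    rw [hdet, isUnit_iff_ne_zero]
    exact_mod_cast (by positivity : (4*a^2 + (1+2*β)^2 : ℝ) ≠ 0)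
  have hU : IsUnit U := (Matrix.isUnit_iff_isUnit_det U).mpr hdetU
  set d : Fin 2 → ℂ := ![-((β:ℂ)*(τ:ℂ))*Complex.I, ((β:ℂ)*(τ:ℂ))*Complex.I] with hddef
  have key : ((-(τ : ℂ) / 2) • ((2 * (a : ℂ)) • tau2 + tau3)) * U = U * Matrix.diagonal d := by
    ext i j
    fin_cases i <;> fin_cases j <;>
      simp [tau2, tau3, hUdef, hddef, Matrix.mul_apply, Fin.sum_univ_two, Matrix.diagonal]
    · ring
    · linear_combination ((τ:ℂ)/2*(1+2*(β:ℂ)) - (β:ℂ)*(τ:ℂ)*(1+2*(β:ℂ))) * Complex.I_sq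
        + 2*(τ:ℂ)*hβ2
    · linear_combination (-(τ:ℂ)/2*(1+2*(β:ℂ)) + (β:ℂ)*(τ:ℂ)*(1+2*(β:ℂ))) * Complex.I_sq
        - 2*(τ:ℂ)*hβ2
    · ring
  have hXconj : ((-(τ : ℂ) / 2) • ((2 * (a : ℂ)) • tau2 + tau3))
      = U * Matrix.diagonal d * U⁻¹ := by
    rw [← key, Matrix.mul_assoc, Matrix.mul_nonsing_inv U hdetU, Matrix.mul_one]
  rw [hXconj, Matrix.exp_conj U _ hU, Matrix.exp_diagonal]
  have hexp : NormedSpace.exp d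
      = ![(Real.cos (β*τ) : ℂ) - (Real.sin (β*τ) : ℂ)*Complex.I,
          (Real.cos (β*τ) : ℂ) + (Real.sin (β*τ) : ℂ)*Complex.I] := by
    funext i
    fin_cases i <;>
      simp [hddef, ← Complex.exp_eq_exp_ℂ]
    · rw [show -((β:ℂ)*(τ:ℂ)*Complex.I) = (-((β:ℂ)*(τ:ℂ)))*Complex.I by ring,
        Complex.exp_mul_I, Complex.cos_neg, Complex.sin_neg]
      ring
    · exact Complex.exp_mul_I _
  rw [hexp]
  set E : Matrix (Fin 2) (Fin 2) ℂ :=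
    Matrix.diagonal ![(Real.cos (β*τ) : ℂ) - (Real.sin (β*τ) : ℂ)*Complex.I,
          (Real.cos (β*τ) : ℂ) + (Real.sin (β*τ) : ℂ)*Complex.I] with hEdef
  have final : !![(Real.cos (β * τ) : ℂ)
        + (Complex.I / (2 * (β : ℂ))) * (Real.sin (β * τ) : ℂ),
      ((a / β) * Real.sin (β * τ) : ℝ);
    -(((a / β) * Real.sin (β * τ) : ℝ) : ℂ),
      (Real.cos (β * τ) : ℂ)
        - (Complex.I / (2 * (β : ℂ))) * (Real.sin (β * τ) : ℂ)] * U = U * E := by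
    ext i j
    fin_cases i <;> fin_cases j <;>
      simp [hUdef, hEdef, Matrix.mul_apply, Fin.sum_univ_two, Matrix.diagonal] <;>
      push_cast <;> field_simp
    · ring
    · linear_combination ((β:ℂ)*Complex.sin ((β:ℂ)*(τ:ℂ))*(1+2*(β:ℂ))
          - 2*(β:ℂ)^2*(1+2*(β:ℂ))*Complex.sin ((β:ℂ)*(τ:ℂ))) * Complex.I_sq
        + 4*(β:ℂ)*Complex.sin ((β:ℂ)*(τ:ℂ))*hβ2 + (-(β:ℂ)*Complex.sin ((β:ℂ)*(τ:ℂ)) - 4*(β:ℂ)^2*Complex.sin ((β:ℂ)*(τ:ℂ)) + 4*(β:ℂ)^3*Complex.sin ((β:ℂ)*(τ:ℂ)) + Complex.sin ((β:ℂ)*(τ:ℂ))) * Complex.I_sq + (4*Complex.sin ((β:ℂ)*(τ:ℂ)) - 4*(β:ℂ)*Complex.sin ((β:ℂ)*(τ:ℂ))) * hβ2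
    · linear_combination (-(β:ℂ)*Complex.sin ((β:ℂ)*(τ:ℂ))*(1+2*(β:ℂ))
          + 2*(β:ℂ)^2*(1+2*(β:ℂ))*Complex.sin ((β:ℂ)*(τ:ℂ))) * Complex.I_sq
        - 4*(β:ℂ)*Complex.sin ((β:ℂ)*(τ:ℂ))*hβ2 - (-(β:ℂ)*Complex.sin ((β:ℂ)*(τ:ℂ)) - 4*(β:ℂ)^2*Complex.sin ((β:ℂ)*(τ:ℂ)) + 4*(β:ℂ)^3*Complex.sin ((β:ℂ)*(τ:ℂ)) + Complex.sin ((β:ℂ)*(τ:ℂ))) * Complex.I_sq - (4*Complex.sin ((β:ℂ)*(τ:ℂ)) - 4*(β:ℂ)*Complex.sin ((β:ℂ)*(τ:ℂ))) * hβ2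
    · ring
  calc _ = _ * (U * U⁻¹) := by rw [Matrix.mul_nonsing_inv U hdetU, Matrix.mul_one]
    _ = U * E * U⁻¹ := by rw [← Matrix.mul_assoc, final]

/-- For all `r, τ, c ∈ ℝ`, with `β_c = √(c²r² + 1/4)`, the matrix
`A(τ,c)` equals the matrix exponential `exp(−(τ/2)·(2rc·τ₂ + τ₃))`. -/
theorem statement12 (r τ c : ℝ) :
    Amat r τ c
      = NormedSpace.exp
          ((-(τ : ℂ) / 2) • ((2 * (r : ℂ) * (c : ℂ)) • tau2 + tau3)) := by
  have h0 : (0:ℝ) < c^2*r^2 + 1/4 := by positivity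
  have h := statement12_aux (Real.sqrt (c^2*r^2 + 1/4)) (c*r) τ (Real.sqrt_pos.mpr h0)
    (by rw [Real.sq_sqrt h0.le]; ring)
  have hs : (2 * ((c*r : ℝ) : ℂ)) = 2 * (r : ℂ) * (c : ℂ) := by push_cast; ring
  rw [hs] at h
  rw [Amat]
  exact h
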